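/- Let R → S be a faithfully flat ring homomorphism and let A be an R-algebra. If the S-algebra S ⊗_R A is finitely generated, then A is a finitely generated R-algebra. -/

import Mathlib

set_option synthInstance.maxHeartbeats 400000 in
open TensorProduct in
theorem finiteType_of_faithfullyFlat_base_change
    {R S A : Type*} [CommRing R] [CommRing S] [CommRing A]
    [Algebra R S] [Algebra R A] [Module.FaithfullyFlat R S]
    (hfg : Algebra.FiniteType S (S ⊗[R] A)) :
    Algebra.FiniteType R A := by
  classical
  obtain ⟨T, hT⟩ := hfg.1
  have hrep : ∀ t : S ⊗[R] A, ∃ u : Finset (S × A), t = ∑ i ∈ u, i.1 ⊗ₜ[R] i.2 :=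
    fun t => TensorProduct.exists_finset t
  choose u hu using hrep
  set s : Finset A := T.biUnion (fun t => (u t).image Prod.snd) with hs
  set B : Subalgebra R A := Algebra.adjoin R (s : Set A) with hB
  -- the base-changed algebra map
  set f : S ⊗[R] B →ₐ[S] S ⊗[R] A :=
    Algebra.TensorProduct.map (AlgHom.id S S) B.val with hf
  -- f is surjective
  have hfsurj : Function.Surjective f := by
    rw [← AlgHom.range_eq_top]
    rw [← top_le_iff, ← hT]
    rw [Algebra.adjoin_le_iff]
    intro t ht
    rw [hu t]
    refine Subalgebra.sum_mem _ fun i hi => ?_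
    have hmem : i.2 ∈ B := by
      apply Algebra.subset_adjoin
      exact Finset.mem_coe.2 (Finset.mem_biUnion.2
        ⟨t, Finset.mem_coe.1 ht, Finset.mem_image_of_mem _ hi⟩)
    refine (AlgHom.mem_range f).mpr ⟨i.1 ⊗ₜ[R] (⟨i.2, hmem⟩ : B), ?_⟩
    simp [hf]
  -- so the linear map lTensor of the inclusion is surjective
  have hlin : ∀ y : S ⊗[R] B,
      LinearMap.lTensor S (B.toSubmodule.subtype) y = f y := by
    intro y
    induction y using TensorProduct.induction_on with
    | zero => rw [map_zero, map_zero]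
    | tmul x b => rfl
    | add x y hx hy => rw [map_add, map_add, hx, hy]
  have hlsurj : Function.Surjective (LinearMap.lTensor S (B.toSubmodule.subtype)) := by
    intro x
    obtain ⟨y, hy⟩ := hfsurj x
    exact ⟨y, by rw [hlin, hy]⟩
  -- quotient module is killed by tensoring
  have hq : Subsingleton (S ⊗[R] (A ⧸ B.toSubmodule)) := by
    constructor
    intro x y
    have hsurj2 : Function.Surjective (LinearMap.lTensor S B.toSubmodule.mkQ) :=
      LinearMap.lTensor_surjective S (Submodule.mkQ_surjective _)
    have hcomp : (LinearMap.lTensor S B.toSubmodule.mkQ).comp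
        (LinearMap.lTensor S B.toSubmodule.subtype) = 0 := by
      rw [← LinearMap.lTensor_comp]
      have : B.toSubmodule.mkQ.comp B.toSubmodule.subtype = 0 := by
        ext b; simp
      rw [this, LinearMap.lTensor_zero]
    have key : ∀ z : S ⊗[R] (A ⧸ B.toSubmodule), z = 0 := by
      intro z
      obtain ⟨w, rfl⟩ := hsurj2 z
      obtain ⟨v, rfl⟩ := hlsurj w
      have := congrFun (congrArg DFunLike.coe hcomp) v
      simpa using this
    rw [key x, key y]
  -- faithful flatness: A ⧸ B = 0
  have : Subsingleton (A ⧸ B.toSubmodule) :=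
    Module.FaithfullyFlat.lTensor_reflects_triviality R S _
  have htop : B.toSubmodule = ⊤ := Submodule.Quotient.subsingleton_iff.1 this
  have hBtop : B = ⊤ := by
    rw [← Algebra.toSubmodule_eq_top]
    exact htop
  exact ⟨⟨s, by rw [← hB, hBtop]⟩⟩
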